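/- Let γ ∈ (−1, 1), γ ≠ 0, and Φ(ζ) = lim_{R→∞} ∫_{−R}^{R} |s|^γ/(s − ζ) ds for Im ζ ≠ 0. Then Φ is injective on ℂ \ ℝ: there is a nonzero constant C with Φ(ζ) = C·Δ(ζ) on the upper half-plane (Δ the principal branch of z^γ), and Φ is odd, and these facts together imply injectivity. -/

import Mathlib

open MeasureTheory Complex Set Filter Metric Topology

/-- The absolutely convergent form
`Φ(ζ) = ∫₀^∞ 2ζ s^γ/((s-ζ)(s+ζ)) ds` of the principal-value integral
`lim_{R→∞} ∫_{-R}^R |s|^γ/(s-ζ) ds`. -/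
noncomputable def Phi2 (γ : ℝ) (ζ : ℂ) : ℂ :=
  ∫ s in Set.Ioi (0:ℝ), 2 * ζ * ((s ^ γ : ℝ) : ℂ) / (((s : ℂ) - ζ) * ((s : ℂ) + ζ))

namespace Stmt10aux

/-- integrand of `Phi2` -/
noncomputable def f (γ : ℝ) (ζ : ℂ) (t : ℝ) : ℂ :=
  2 * ζ * ((t ^ γ : ℝ) : ℂ) / (((t : ℂ) - ζ) * ((t : ℂ) + ζ))

/-- its `ζ`-derivative -/
noncomputable def fd (γ : ℝ) (ζ : ℂ) (t : ℝ) : ℂ :=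
  2 * ((t ^ γ : ℝ) : ℂ) * ((t : ℂ) ^ 2 + ζ ^ 2) / ((((t : ℂ) - ζ) * ((t : ℂ) + ζ)) ^ 2)

lemma im_le_norm_sub (ζ : ℂ) (t : ℝ) : |ζ.im| ≤ ‖(t : ℂ) - ζ‖ := by
  have h := Complex.abs_im_le_norm ((t : ℂ) - ζ)
  simp only [Complex.sub_im, Complex.ofReal_im, zero_sub, abs_neg] at h
  simpa using h

lemma im_le_norm_add (ζ : ℂ) (t : ℝ) : |ζ.im| ≤ ‖(t : ℂ) + ζ‖ := by
  have h := Complex.abs_im_le_norm ((t : ℂ) + ζ)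
  simp only [Complex.add_im, Complex.ofReal_im, zero_add] at h
  simpa using h

lemma sub_norm_le_norm_sub (ζ : ℂ) {t : ℝ} (ht : 0 ≤ t) : t - ‖ζ‖ ≤ ‖(t : ℂ) - ζ‖ := by
  have h := norm_sub_norm_le (t : ℂ) ζ
  simpa [Complex.norm_real, _root_.abs_of_nonneg ht] using h

lemma sub_norm_le_norm_add (ζ : ℂ) {t : ℝ} (ht : 0 ≤ t) : t - ‖ζ‖ ≤ ‖(t : ℂ) + ζ‖ := by
  have h := norm_sub_norm_le (t : ℂ) (-ζ)
  simpa [Complex.norm_real, _root_.abs_of_nonneg ht, sub_neg_eq_add] using h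

lemma sub_ne (ζ : ℂ) (hζ : ζ.im ≠ 0) (t : ℝ) : (t : ℂ) - ζ ≠ 0 := by
  intro h
  rw [sub_eq_zero] at h
  apply hζ; rw [← h]; simp

lemma add_ne (ζ : ℂ) (hζ : ζ.im ≠ 0) (t : ℝ) : (t : ℂ) + ζ ≠ 0 := by
  intro h
  have : ζ = -(t : ℂ) := by linear_combination h
  apply hζ; rw [this]; simp


/-- The generic integrable bound on `(0,∞)`. -/
lemma integrable_bound {γ : ℝ} (hγ : γ ∈ Set.Ioo (-1 : ℝ) 1) (c₁ c₂ T : ℝ) (hT : 0 < T) :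
    IntegrableOn (fun t : ℝ => if t ≤ T then c₁ * t ^ γ else c₂ * t ^ (γ - 2)) (Ioi 0) := by
  have h1 : IntegrableOn (fun t : ℝ => c₁ * t ^ γ) (Ioc 0 T) := by
    have := (intervalIntegral.intervalIntegrable_rpow' (a := 0) (b := T) hγ.1)
    rw [intervalIntegrable_iff_integrableOn_Ioc_of_le hT.le] at this
    exact this.const_mul c₁
  have h2 : IntegrableOn (fun t : ℝ => c₂ * t ^ (γ - 2)) (Ioi T) :=
    (integrableOn_Ioi_rpow_of_lt (by linarith [hγ.2]) hT).const_mul c₂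
  have h1' : IntegrableOn (fun t : ℝ => if t ≤ T then c₁ * t ^ γ else c₂ * t ^ (γ - 2))
      (Ioc 0 T) := by
    apply h1.congr_fun (fun x hx => ?_) measurableSet_Ioc
    simp [hx.2]
  have h2' : IntegrableOn (fun t : ℝ => if t ≤ T then c₁ * t ^ γ else c₂ * t ^ (γ - 2))
      (Ioi T) := by
    apply h2.congr_fun (fun x hx => ?_) measurableSet_Ioi
    simp [not_le.2 (mem_Ioi.1 hx)]
  apply (h1'.union h2').mono_set
  intro x hx
  rcases le_or_gt x T with h | h
  · exact Or.inl ⟨hx, h⟩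
  · exact Or.inr h

lemma continuousOn_f {γ : ℝ} {ζ : ℂ} (hζ : ζ.im ≠ 0) : ContinuousOn (f γ ζ) (Ioi 0) := by
  apply ContinuousOn.div
  · apply ContinuousOn.mul continuousOn_const
    intro t ht
    exact (Complex.continuous_ofReal.continuousAt.comp
      (Real.continuousAt_rpow_const t γ (Or.inl (ne_of_gt ht)))).continuousWithinAt
  · fun_prop
  · intro t ht
    exact mul_ne_zero (sub_ne ζ hζ t) (add_ne ζ hζ t)

lemma continuousOn_fd {γ : ℝ} {ζ : ℂ} (hζ : ζ.im ≠ 0) : ContinuousOn (fd γ ζ) (Ioi 0) := by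
  apply ContinuousOn.div
  · apply ContinuousOn.mul
    · apply ContinuousOn.mul continuousOn_const
      intro t ht
      exact (Complex.continuous_ofReal.continuousAt.comp
        (Real.continuousAt_rpow_const t γ (Or.inl (ne_of_gt ht)))).continuousWithinAt
    · fun_prop
  · fun_prop
  · intro t ht
    exact pow_ne_zero 2 (mul_ne_zero (sub_ne ζ hζ t) (add_ne ζ hζ t))

lemma norm_f {γ : ℝ} {ζ : ℂ} {t : ℝ} (ht : 0 < t) :
    ‖f γ ζ t‖ = 2 * ‖ζ‖ * t ^ γ / (‖(t : ℂ) - ζ‖ * ‖(t : ℂ) + ζ‖) := by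
  rw [f, norm_div, norm_mul, norm_mul, Complex.norm_real]
  simp [Real.abs_rpow_of_nonneg ht.le, _root_.abs_of_nonneg ht.le]

lemma norm_fd {γ : ℝ} {ζ : ℂ} {t : ℝ} (ht : 0 < t) :
    ‖fd γ ζ t‖ = 2 * t ^ γ * ‖(t : ℂ) ^ 2 + ζ ^ 2‖ / (‖(t : ℂ) - ζ‖ * ‖(t : ℂ) + ζ‖) ^ 2 := by
  rw [fd, norm_div, norm_mul, norm_mul, Complex.norm_real, norm_pow, norm_mul]
  simp [Real.abs_rpow_of_nonneg ht.le, _root_.abs_of_nonneg ht.le]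


lemma f_bound {γ : ℝ} {ζ : ℂ} {δ M t : ℝ} (hδ : 0 < δ) (hδζ : δ ≤ |ζ.im|) (hM : 1 ≤ M)
    (hζM : ‖ζ‖ ≤ M) (ht : 0 < t) :
    ‖f γ ζ t‖ ≤ if t ≤ 2 * M + 1 then 2 * M / δ ^ 2 * t ^ γ else 8 * M * t ^ (γ - 2) := by
  have ha1 : δ ≤ ‖(t : ℂ) - ζ‖ := hδζ.trans (im_le_norm_sub ζ t)
  have hb1 : δ ≤ ‖(t : ℂ) + ζ‖ := hδζ.trans (im_le_norm_add ζ t)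
  have htγ : (0 : ℝ) ≤ t ^ γ := Real.rpow_nonneg ht.le γ
  rw [norm_f ht]
  split_ifs with h
  · have hrw : 2 * M / δ ^ 2 * t ^ γ = 2 * M * t ^ γ / (δ * δ) := by
      rw [pow_two]; ring
    rw [hrw]
    apply div_le_div₀ (by positivity)
      (mul_le_mul_of_nonneg_right (by linarith) htγ) (mul_pos hδ hδ)
      (mul_le_mul ha1 hb1 hδ.le (norm_nonneg _))
  · push_neg at h
    have hM0 : (0 : ℝ) < M := lt_of_lt_of_le one_pos hM
    have ht2 : t / 2 ≤ t - ‖ζ‖ := by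
      have : 2 * M ≤ t := by linarith
      linarith
    have ha2 : t / 2 ≤ ‖(t : ℂ) - ζ‖ := ht2.trans (sub_norm_le_norm_sub ζ ht.le)
    have hb2 : t / 2 ≤ ‖(t : ℂ) + ζ‖ := ht2.trans (sub_norm_le_norm_add ζ ht.le)
    have hrw : 8 * M * t ^ (γ - 2) = 2 * M * t ^ γ / (t / 2 * (t / 2)) := by
      rw [Real.rpow_sub ht, Real.rpow_two]
      field_simp
      ring
    rw [hrw]
    apply div_le_div₀ (by positivity)
      (mul_le_mul_of_nonneg_right (by linarith) htγ) (by positivity)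
      (mul_le_mul ha2 hb2 (by positivity) (norm_nonneg _))

lemma fd_bound {γ : ℝ} {ζ : ℂ} {δ M t : ℝ} (hδ : 0 < δ) (hδζ : δ ≤ |ζ.im|) (hM : 1 ≤ M)
    (hζM : ‖ζ‖ ≤ M) (ht : 0 < t) :
    ‖fd γ ζ t‖ ≤ if t ≤ 2 * M + 1 then 2 * ((2 * M + 1) ^ 2 + M ^ 2) / δ ^ 4 * t ^ γ
      else 64 * t ^ (γ - 2) := by
  have ha1 : δ ≤ ‖(t : ℂ) - ζ‖ := hδζ.trans (im_le_norm_sub ζ t)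
  have hb1 : δ ≤ ‖(t : ℂ) + ζ‖ := hδζ.trans (im_le_norm_add ζ t)
  have htγ : (0 : ℝ) ≤ t ^ γ := Real.rpow_nonneg ht.le γ
  have hnum : ‖(t : ℂ) ^ 2 + ζ ^ 2‖ ≤ t ^ 2 + M ^ 2 := by
    calc ‖(t : ℂ) ^ 2 + ζ ^ 2‖ ≤ ‖(t : ℂ) ^ 2‖ + ‖ζ ^ 2‖ := norm_add_le _ _
      _ = t ^ 2 + ‖ζ‖ ^ 2 := by
          rw [norm_pow, norm_pow, Complex.norm_real, Real.norm_eq_abs, _root_.abs_of_nonneg ht.le]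
      _ ≤ t ^ 2 + M ^ 2 := by
          have := pow_le_pow_left₀ (norm_nonneg ζ) hζM 2
          linarith
  rw [norm_fd ht]
  split_ifs with h
  · have hrw : 2 * ((2 * M + 1) ^ 2 + M ^ 2) / δ ^ 4 * t ^ γ
        = 2 * t ^ γ * ((2 * M + 1) ^ 2 + M ^ 2) / (δ * δ) ^ 2 := by
      ring
    rw [hrw]
    apply div_le_div₀ (by positivity) ?_ (by positivity) ?_
    · have h1 : t ^ 2 ≤ (2 * M + 1) ^ 2 := by nlinarith
      have : ‖(t : ℂ) ^ 2 + ζ ^ 2‖ ≤ (2 * M + 1) ^ 2 + M ^ 2 := by linarith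
      nlinarith [norm_nonneg ((t : ℂ) ^ 2 + ζ ^ 2)]
    · apply pow_le_pow_left₀ (by positivity)
      exact mul_le_mul ha1 hb1 hδ.le (norm_nonneg _)
  · push_neg at h
    have hM0 : (0 : ℝ) < M := lt_of_lt_of_le one_pos hM
    have ht2 : t / 2 ≤ t - ‖ζ‖ := by
      have : 2 * M ≤ t := by linarith
      linarith
    have ha2 : t / 2 ≤ ‖(t : ℂ) - ζ‖ := ht2.trans (sub_norm_le_norm_sub ζ ht.le)
    have hb2 : t / 2 ≤ ‖(t : ℂ) + ζ‖ := ht2.trans (sub_norm_le_norm_add ζ ht.le)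
    have hMt : M ≤ t := by linarith
    have hrw : 64 * t ^ (γ - 2) = 2 * t ^ γ * (2 * t ^ 2) / (t / 2 * (t / 2)) ^ 2 := by
      rw [Real.rpow_sub ht, Real.rpow_two]
      field_simp
      ring
    rw [hrw]
    apply div_le_div₀ (by positivity) ?_ (by positivity) ?_
    · have h2 : M ^ 2 ≤ t ^ 2 := by nlinarith
      have : ‖(t : ℂ) ^ 2 + ζ ^ 2‖ ≤ 2 * t ^ 2 := by linarith
      nlinarith [norm_nonneg ((t : ℂ) ^ 2 + ζ ^ 2), htγ]
    · apply pow_le_pow_left₀ (by positivity)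
      exact mul_le_mul ha2 hb2 (by positivity) (norm_nonneg _)


lemma integrable_f {γ : ℝ} (hγ : γ ∈ Set.Ioo (-1 : ℝ) 1) {ζ : ℂ} (hζ : ζ.im ≠ 0) :
    IntegrableOn (f γ ζ) (Ioi 0) := by
  have hδ : 0 < |ζ.im| := abs_pos.2 hζ
  have hM : (1 : ℝ) ≤ ‖ζ‖ + 1 := by linarith [norm_nonneg ζ]
  apply Integrable.mono' (integrable_bound hγ (2 * (‖ζ‖ + 1) / |ζ.im| ^ 2) (8 * (‖ζ‖ + 1))
    (2 * (‖ζ‖ + 1) + 1) (by positivity))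
    ((continuousOn_f hζ).aestronglyMeasurable measurableSet_Ioi)
  rw [ae_restrict_iff' measurableSet_Ioi]
  filter_upwards with t ht
  exact f_bound hδ le_rfl hM (by linarith) ht

lemma hasDerivAt_f {γ : ℝ} {t : ℝ} (ht : 0 < t) {z : ℂ} (hz : z.im ≠ 0) :
    HasDerivAt (fun w => f γ w t) (fd γ z t) z := by
  set c : ℂ := ((t ^ γ : ℝ) : ℂ)
  have hu : HasDerivAt (fun w : ℂ => 2 * w * c) (2 * c) z := by
    simpa using ((hasDerivAt_id z).const_mul 2).mul_const c
  have hv : HasDerivAt (fun w : ℂ => ((t : ℂ) - w) * ((t : ℂ) + w))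
      (-1 * ((t : ℂ) + z) + ((t : ℂ) - z) * 1) z := by
    exact (((hasDerivAt_id z).const_sub (t : ℂ))).mul ((hasDerivAt_id z).const_add (t : ℂ))
  have hvz : ((t : ℂ) - z) * ((t : ℂ) + z) ≠ 0 := mul_ne_zero (sub_ne z hz t) (add_ne z hz t)
  have := hu.div hv hvz
  refine this.congr_deriv ?_
  rw [fd]
  have h1 : (t : ℂ) - z ≠ 0 := sub_ne z hz t
  have h2 : (t : ℂ) + z ≠ 0 := add_ne z hz t
  field_simp
  ring

lemma hasDerivAt_Phi2 {γ : ℝ} (hγ : γ ∈ Set.Ioo (-1 : ℝ) 1) {z : ℂ} (hz : 0 < z.im) :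
    IntegrableOn (fd γ z) (Ioi 0) ∧
      HasDerivAt (Phi2 γ) (∫ t in Ioi (0 : ℝ), fd γ z t) z := by
  set ε : ℝ := z.im / 2 with hε
  have hε0 : 0 < ε := by positivity
  set M : ℝ := ‖z‖ + z.im / 2 + 1 with hMdef
  have hnz : z.im ≤ ‖z‖ := le_trans (le_abs_self _) (Complex.abs_im_le_norm z)
  have hM1 : (1 : ℝ) ≤ M := by
    have : (0:ℝ) ≤ ‖z‖ := norm_nonneg z
    simp only [hMdef]; linarith
  have hball : ∀ w ∈ ball z ε, ε ≤ |w.im| ∧ ‖w‖ ≤ M ∧ w.im ≠ 0 := by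
    intro w hw
    rw [mem_ball, Complex.dist_eq] at hw
    have him : |w.im - z.im| ≤ ‖w - z‖ := by
      simpa using Complex.abs_im_le_norm (w - z)
    have h1 : z.im - ε ≤ w.im := by
      have := abs_le.1 (him.trans hw.le)
      linarith [this.1]
    have h2 : ε ≤ w.im := by rw [hε] at h1 ⊢; linarith
    have hwim : 0 < w.im := lt_of_lt_of_le hε0 h2
    refine ⟨le_trans h2 (le_abs_self _), ?_, ne_of_gt hwim⟩
    have : ‖w‖ ≤ ‖z‖ + ‖w - z‖ := by
      simpa using norm_add_le z (w - z)
    simp only [hMdef]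
    linarith [hw.le]
  have key := hasDerivAt_integral_of_dominated_loc_of_deriv_le (μ := volume.restrict (Ioi 0))
    (F := fun w t => f γ w t) (F' := fun w t => fd γ w t)
    (x₀ := z) (s := ball z ε) (ball_mem_nhds z hε0)
    (bound := fun t => if t ≤ 2 * M + 1 then 2 * ((2 * M + 1) ^ 2 + M ^ 2) / ε ^ 4 * t ^ γ
      else 64 * t ^ (γ - 2))
    ?_ ?_ ?_ ?_ ?_ ?_
  · exact ⟨key.1, key.2⟩
  · filter_upwards [ball_mem_nhds z hε0] with w hw
    exact (continuousOn_f (hball w hw).2.2).aestronglyMeasurable measurableSet_Ioi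
  · exact integrable_f hγ (ne_of_gt hz)
  · exact (continuousOn_fd (ne_of_gt hz)).aestronglyMeasurable measurableSet_Ioi
  · rw [ae_restrict_iff' measurableSet_Ioi]
    filter_upwards with t ht w hw
    exact fd_bound hε0 (hball w hw).1 hM1 (hball w hw).2.1 ht
  · exact integrable_bound hγ _ _ _ (by positivity)
  · rw [ae_restrict_iff' measurableSet_Ioi]
    filter_upwards with t ht w hw
    exact hasDerivAt_f ht (hball w hw).2.2


/-- the antiderivative used for the ODE -/
noncomputable def g (γ : ℝ) (ζ : ℂ) (t : ℝ) : ℂ :=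
  -2 * ζ * ((t ^ (γ + 1) : ℝ) : ℂ) / (((t : ℂ) - ζ) * ((t : ℂ) + ζ))

lemma hasDerivAt_g {γ : ℝ} {ζ : ℂ} (hζ : ζ.im ≠ 0) {t : ℝ} (ht : 0 < t) :
    HasDerivAt (g γ ζ) (ζ * fd γ ζ t - (γ : ℂ) * f γ ζ t) t := by
  have h1 : (t : ℂ) - ζ ≠ 0 := sub_ne ζ hζ t
  have h2 : (t : ℂ) + ζ ≠ 0 := add_ne ζ hζ t
  have hu0 : HasDerivAt (fun s : ℝ => s ^ (γ + 1)) ((γ + 1) * t ^ γ) t := by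
    have := Real.hasDerivAt_rpow_const (x := t) (p := γ + 1) (Or.inl ht.ne')
    simpa using this
  have hu : HasDerivAt (fun s : ℝ => -2 * ζ * ((s ^ (γ + 1) : ℝ) : ℂ))
      (-2 * ζ * (((γ + 1) * t ^ γ : ℝ) : ℂ)) t := by
    exact (hu0.ofReal_comp).const_mul (-2 * ζ)
  have hre : HasDerivAt (fun s : ℝ => (s : ℂ)) 1 t := by
    simpa using (hasDerivAt_id t).ofReal_comp
  have hv : HasDerivAt (fun s : ℝ => ((s : ℂ) - ζ) * ((s : ℂ) + ζ))
      (1 * ((t : ℂ) + ζ) + ((t : ℂ) - ζ) * 1) t :=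
    ((hre.sub_const ζ).mul (hre.add_const ζ))
  have hvz : ((t : ℂ) - ζ) * ((t : ℂ) + ζ) ≠ 0 := mul_ne_zero h1 h2
  have := hu.div hv hvz
  refine this.congr_deriv ?_
  have hsplit : ((t ^ (γ + 1) : ℝ) : ℂ) = ((t ^ γ : ℝ) : ℂ) * (t : ℂ) := by
    rw [Real.rpow_add_one ht.ne' γ]
    push_cast
    ring
  rw [fd, f, hsplit]
  field_simp
  push_cast
  ring

lemma tendsto_g_atTop {γ : ℝ} (hγ : γ ∈ Set.Ioo (-1 : ℝ) 1) (ζ : ℂ) :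
    Tendsto (g γ ζ) atTop (𝓝 0) := by
  have hbb : ∀ᶠ t : ℝ in atTop, ‖g γ ζ t‖ ≤ 8 * ‖ζ‖ * t ^ (γ - 1) := by
    filter_upwards [eventually_ge_atTop (2 * ‖ζ‖ + 1)] with t htζ
    have ht : 0 < t := lt_of_lt_of_le (by positivity) htζ
    have ht2 : t / 2 ≤ t - ‖ζ‖ := by linarith
    have ha2 : t / 2 ≤ ‖(t : ℂ) - ζ‖ := ht2.trans (sub_norm_le_norm_sub ζ ht.le)
    have hb2 : t / 2 ≤ ‖(t : ℂ) + ζ‖ := ht2.trans (sub_norm_le_norm_add ζ ht.le)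
    have hnorm : ‖g γ ζ t‖ = 2 * ‖ζ‖ * t ^ (γ + 1) / (‖(t : ℂ) - ζ‖ * ‖(t : ℂ) + ζ‖) := by
      rw [g, norm_div, norm_mul, norm_mul, Complex.norm_real]
      simp [Real.abs_rpow_of_nonneg ht.le, _root_.abs_of_nonneg ht.le]
    rw [hnorm]
    have hrw : 8 * ‖ζ‖ * t ^ (γ - 1) = 2 * ‖ζ‖ * t ^ (γ + 1) / (t / 2 * (t / 2)) := by
      have : γ - 1 = γ + 1 - 2 := by ring
      rw [this, Real.rpow_sub ht, Real.rpow_two]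
      field_simp
      ring
    rw [hrw]
    apply div_le_div₀ (by positivity) le_rfl (by positivity)
      (mul_le_mul ha2 hb2 (by positivity) (norm_nonneg _))
  refine squeeze_zero_norm' hbb ?_
  have h0 : ∀ t : ℝ, 8 * ‖ζ‖ * t ^ (γ - 1) = 8 * ‖ζ‖ * t ^ (-(1 - γ)) := by
    intro t; ring_nf
  simp only [h0]
  have := (tendsto_rpow_neg_atTop (by linarith [hγ.2] : (0:ℝ) < 1 - γ)).const_mul (8 * ‖ζ‖)
  simpa using this

lemma continuousWithinAt_g {γ : ℝ} (hγ : γ ∈ Set.Ioo (-1 : ℝ) 1) {ζ : ℂ} (hζ : ζ.im ≠ 0) :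
    ContinuousWithinAt (g γ ζ) (Ici 0) 0 := by
  apply ContinuousAt.continuousWithinAt
  apply ContinuousAt.div
  · apply ContinuousAt.mul continuousAt_const
    exact Complex.continuous_ofReal.continuousAt.comp
      (Real.continuousAt_rpow_const 0 (γ + 1) (Or.inr (by linarith [hγ.1])))
  · fun_prop
  · have h1 : ((0 : ℝ) : ℂ) - ζ ≠ 0 := sub_ne ζ hζ 0
    have h2 : ((0 : ℝ) : ℂ) + ζ ≠ 0 := add_ne ζ hζ 0
    exact mul_ne_zero h1 h2

lemma ode {γ : ℝ} (hγ : γ ∈ Set.Ioo (-1 : ℝ) 1) {z : ℂ} (hz : 0 < z.im) :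
    (∫ t in Ioi (0 : ℝ), fd γ z t) = (γ : ℂ) / z * Phi2 γ z := by
  have hζ : z.im ≠ 0 := ne_of_gt hz
  have hintf : IntegrableOn (f γ z) (Ioi 0) := integrable_f hγ hζ
  have hintfd : IntegrableOn (fd γ z) (Ioi 0) := (hasDerivAt_Phi2 hγ hz).1
  have hint : IntegrableOn (fun t => z * fd γ z t - (γ : ℂ) * f γ z t) (Ioi 0) :=
    (hintfd.const_mul z).sub (hintf.const_mul (γ : ℂ))
  have hftc : (∫ t in Ioi (0 : ℝ), (z * fd γ z t - (γ : ℂ) * f γ z t)) = 0 - g γ z 0 := by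
    apply integral_Ioi_of_hasDerivAt_of_tendsto (continuousWithinAt_g hγ hζ)
      (fun t ht => hasDerivAt_g hζ (mem_Ioi.1 ht)) hint (tendsto_g_atTop hγ z)
  have hg0 : g γ z 0 = 0 := by
    rw [g]
    rw [Real.zero_rpow (ne_of_gt (by linarith [hγ.1] : (0:ℝ) < γ + 1))]
    simp
  rw [hg0, sub_zero] at hftc
  rw [integral_sub (hintfd.const_mul z) (hintf.const_mul (γ : ℂ)),
    integral_const_mul, integral_const_mul] at hftc
  have hz0 : z ≠ 0 := by
    intro h; rw [h] at hz; simp at hz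
  have hPhi : Phi2 γ z = ∫ t in Ioi (0 : ℝ), f γ z t := rfl
  rw [hPhi]
  field_simp
  linear_combination hftc


/-- `H z = Phi2 γ z * z^(-γ)` has zero derivative on the upper half-plane. -/
lemma hasDerivAt_H {γ : ℝ} (hγ : γ ∈ Set.Ioo (-1 : ℝ) 1) {z : ℂ} (hz : 0 < z.im) :
    HasDerivAt (fun w => Phi2 γ w * w ^ (-(γ : ℂ))) 0 z := by
  have hz0 : z ≠ 0 := by intro h; rw [h] at hz; simp at hz
  have hP : HasDerivAt (Phi2 γ) ((γ : ℂ) / z * Phi2 γ z) z := by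
    have := (hasDerivAt_Phi2 hγ hz).2
    rwa [ode hγ hz] at this
  have hc : HasDerivAt (fun w : ℂ => w ^ (-(γ : ℂ)))
      (-(γ : ℂ) * z ^ (-(γ : ℂ) - 1) * 1) z :=
    HasDerivAt.cpow_const (hasDerivAt_id z) (Or.inr (ne_of_gt hz))
  have := hP.mul hc
  refine this.congr_deriv ?_
  have hsub : z ^ (-(γ : ℂ) - 1) = z ^ (-(γ : ℂ)) / z := by
    rw [cpow_sub _ _ hz0, cpow_one]
  rw [hsub]
  field_simp
  ring

lemma H_const {γ : ℝ} (hγ : γ ∈ Set.Ioo (-1 : ℝ) 1) {z w : ℂ} (hz : 0 < z.im)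
    (hw : 0 < w.im) :
    Phi2 γ z * z ^ (-(γ : ℂ)) = Phi2 γ w * w ^ (-(γ : ℂ)) := by
  set S : Set ℂ := {u : ℂ | 0 < u.im}
  have hconv : Convex ℝ S := convex_halfSpace_im_gt 0
  have hle := hconv.norm_image_sub_le_of_norm_hasDerivWithin_le
    (f := fun u => Phi2 γ u * u ^ (-(γ : ℂ))) (f' := fun _ => 0) (C := 0)
    (fun u hu => (hasDerivAt_H hγ hu).hasDerivWithinAt)
    (fun u _ => by simp) hw hz
  rw [zero_mul] at hle
  have := norm_le_zero_iff.1 hle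
  linear_combination this -- sub_eq_zero


lemma Phi2_I_ne_zero {γ : ℝ} (hγ : γ ∈ Set.Ioo (-1 : ℝ) 1) : Phi2 γ I ≠ 0 := by
  have hIim : (I : ℂ).im ≠ 0 := by simp
  set h : ℝ → ℝ := fun t => 2 * t ^ γ / (t ^ 2 + 1) with hh
  have hcont : ContinuousOn h (Ioi 0) := by
    apply ContinuousOn.div
    · apply ContinuousOn.mul continuousOn_const
      intro t ht
      exact (Real.continuousAt_rpow_const t γ (Or.inl (ne_of_gt ht))).continuousWithinAt
    · fun_prop
    · intro t _; positivity
  have hint : IntegrableOn h (Ioi 0) := by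
    apply Integrable.mono' (integrable_bound hγ 2 2 1 one_pos)
      (hcont.aestronglyMeasurable measurableSet_Ioi)
    rw [ae_restrict_iff' measurableSet_Ioi]
    filter_upwards with t ht
    have ht0 : (0:ℝ) < t := ht
    have htγ : (0 : ℝ) ≤ t ^ γ := Real.rpow_nonneg ht0.le γ
    have hns : ‖h t‖ = 2 * t ^ γ / (t ^ 2 + 1) := by
      rw [Real.norm_eq_abs, _root_.abs_of_nonneg (by positivity)]
    rw [hns]
    split_ifs with hle
    · rw [div_le_iff₀ (by positivity)]
      nlinarith
    · push_neg at hle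
      have h1t : (1:ℝ) < t := hle
      have hrw : 2 * t ^ (γ - 2) = 2 * t ^ γ / t ^ 2 := by
        rw [Real.rpow_sub ht0, Real.rpow_two]; ring
      rw [hrw]
      apply div_le_div₀ (by positivity) le_rfl (by positivity) (by nlinarith)
  have hpos : 0 < ∫ t in Ioi (0:ℝ), h t := by
    rw [setIntegral_pos_iff_support_of_nonneg_ae]
    · have hsub : Ioi (0:ℝ) ⊆ Function.support h := by
        intro t ht
        have ht0 : (0:ℝ) < t := ht
        have : 0 < h t := by
          rw [hh]
          have := Real.rpow_pos_of_pos ht0 γ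
          positivity
        exact ne_of_gt this
      rw [Set.inter_eq_right.2 hsub]
      simp [Real.volume_Ioi]
    · filter_upwards [ae_restrict_mem measurableSet_Ioi] with t ht
      have ht0 : (0:ℝ) < t := ht
      have := Real.rpow_pos_of_pos ht0 γ
      have : (0:ℝ) < h t := by rw [hh]; positivity
      exact this.le
    · exact hint
  have hrepr : Phi2 γ I = I * ((∫ t in Ioi (0:ℝ), h t : ℝ) : ℂ) := by
    have hfun : ∀ t : ℝ, f γ I t = I * ((h t : ℝ) : ℂ) := by
      intro t
      rw [f, hh]
      have hden : ((t : ℂ) - I) * ((t : ℂ) + I) = (((t ^ 2 + 1 : ℝ) : ℝ) : ℂ) := by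
        push_cast
        ring_nf
        simp [Complex.I_sq]
        ring
      rw [hden]
      push_cast
      have : ((t:ℂ)^2 + 1) ≠ 0 := by
        intro hcon
        have hc2 : ((t:ℂ)^2 + 1) = ((t^2 + 1 : ℝ) : ℂ) := by push_cast; ring
        rw [hc2, Complex.ofReal_eq_zero] at hcon
        nlinarith
      field_simp
    have : Phi2 γ I = ∫ t in Ioi (0:ℝ), I * ((h t : ℝ) : ℂ) := by
      rw [show Phi2 γ I = ∫ t in Ioi (0:ℝ), f γ I t from rfl]
      congr 1
      funext t
      exact hfun t
    rw [this, integral_const_mul]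
    congr 1
    exact integral_ofReal (𝕜 := ℂ)
  rw [hrepr]
  apply mul_ne_zero I_ne_zero
  rw [Complex.ofReal_ne_zero]
  exact ne_of_gt hpos

lemma repr_UHP {γ : ℝ} (hγ : γ ∈ Set.Ioo (-1 : ℝ) 1) :
    ∃ C : ℂ, C ≠ 0 ∧ ∀ ζ : ℂ, 0 < ζ.im → Phi2 γ ζ = C * ζ ^ (γ : ℂ) := by
  refine ⟨Phi2 γ I * I ^ (-(γ : ℂ)), ?_, ?_⟩
  · apply mul_ne_zero (Phi2_I_ne_zero hγ)
    rw [Ne, cpow_eq_zero_iff]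
    simp
  · intro ζ hζ
    have hζ0 : ζ ≠ 0 := by intro h; rw [h] at hζ; simp at hζ
    have hne : ζ ^ (γ : ℂ) ≠ 0 := by
      rw [Ne, cpow_eq_zero_iff]
      tauto
    have hHI : Phi2 γ ζ * ζ ^ (-(γ : ℂ)) = Phi2 γ I * I ^ (-(γ : ℂ)) :=
      H_const hγ hζ (by simp)
    calc Phi2 γ ζ = Phi2 γ ζ * ζ ^ (-(γ : ℂ)) * ζ ^ (γ : ℂ) := by
          rw [cpow_neg]
          field_simp
      _ = Phi2 γ I * I ^ (-(γ : ℂ)) * ζ ^ (γ : ℂ) := by rw [hHI]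

lemma odd_Phi2 (γ : ℝ) (ζ : ℂ) : Phi2 γ (-ζ) = -Phi2 γ ζ := by
  rw [show Phi2 γ (-ζ) = ∫ t in Ioi (0:ℝ), f γ (-ζ) t from rfl,
      show Phi2 γ ζ = ∫ t in Ioi (0:ℝ), f γ ζ t from rfl, ← integral_neg]
  congr 1
  funext t
  rw [f, f]
  ring

lemma arg_bounds {z : ℂ} (hz : 0 < z.im) : 0 < z.arg ∧ z.arg < Real.pi := by
  constructor
  · have h0 : 0 ≤ arg z := arg_nonneg_iff.2 hz.le
    rcases h0.lt_or_eq with h | h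
    · exact h
    · exact absurd (arg_eq_zero_iff.1 h.symm).2 (ne_of_gt hz)
  · exact arg_lt_pi_iff.2 (Or.inr (ne_of_gt hz))

lemma abs_arg_diff_lt {γ : ℝ} (hγ : γ ∈ Set.Ioo (-1:ℝ) 1) {z w : ℂ}
    (hz : 0 < z.im) (hw : 0 < w.im) : |γ * (z.arg - w.arg)| < Real.pi := by
  obtain ⟨hz1, hz2⟩ := arg_bounds hz
  obtain ⟨hw1, hw2⟩ := arg_bounds hw
  have h1 : |z.arg - w.arg| < Real.pi := by
    rw [abs_sub_lt_iff]
    constructor <;> linarith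
  have h2 : |γ| ≤ 1 := by
    rw [abs_le]
    constructor <;> linarith [hγ.1, hγ.2]
  calc |γ * (z.arg - w.arg)| = |γ| * |z.arg - w.arg| := abs_mul _ _
    _ ≤ 1 * |z.arg - w.arg| := by
        apply mul_le_mul_of_nonneg_right h2 (abs_nonneg _)
    _ < Real.pi := by rw [one_mul]; exact h1

lemma im_of_exp_rel {γ : ℝ} {z w : ℂ} (n : ℤ) (r : ℝ)
    (hn : Complex.log z * (γ : ℂ) = Complex.log w * (γ : ℂ) + (r : ℂ) * I + (n : ℂ) * (2 * (Real.pi:ℂ) * I)) :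
    z.arg * γ = w.arg * γ + r + n * (2 * Real.pi) := by
  have := congrArg Complex.im hn
  simpa [Complex.mul_im, Complex.add_im, Complex.log_im, Complex.log_re] using this

lemma cpow_inj {γ : ℝ} (hγ : γ ∈ Set.Ioo (-1:ℝ) 1) (hγ0 : γ ≠ 0) {z w : ℂ}
    (hz : 0 < z.im) (hw : 0 < w.im) (h : z ^ (γ:ℂ) = w ^ (γ:ℂ)) : z = w := by
  have hz0 : z ≠ 0 := fun h0 => by rw [h0] at hz; simp at hz
  have hw0 : w ≠ 0 := fun h0 => by rw [h0] at hw; simp at hw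
  rw [cpow_def_of_ne_zero hz0, cpow_def_of_ne_zero hw0] at h
  obtain ⟨n, hn⟩ := exp_eq_exp_iff_exists_int.1 h
  have hn' : Complex.log z * (γ : ℂ) = Complex.log w * (γ : ℂ) + ((0:ℝ) : ℂ) * I
      + (n : ℂ) * (2 * (Real.pi:ℂ) * I) := by
    rw [hn]; push_cast; ring
  have him := im_of_exp_rel n 0 hn'
  have habs := abs_arg_diff_lt hγ hz hw
  have hn0 : n = 0 := by
    by_contra hne
    have h1 : (1:ℝ) ≤ |(n:ℝ)| := by
      rw [← Int.cast_abs]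
      exact_mod_cast Int.one_le_abs (by exact_mod_cast hne)
    have h2 : |γ * (z.arg - w.arg)| = |(n:ℝ)| * (2 * Real.pi) := by
      rw [show γ * (z.arg - w.arg) = (n:ℝ) * (2 * Real.pi) by linarith, abs_mul,
        _root_.abs_of_nonneg (by positivity : (0:ℝ) ≤ 2 * Real.pi)]
    rw [h2] at habs
    nlinarith [Real.pi_pos]
  have hmul : Complex.log z * (γ:ℂ) = Complex.log w * (γ:ℂ) := by
    rw [hn, hn0]; norm_num
  have hlog : Complex.log z = Complex.log w :=
    mul_right_cancel₀ (Complex.ofReal_ne_zero.2 hγ0) hmul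
  rw [← Complex.exp_log hz0, ← Complex.exp_log hw0, hlog]

lemma cpow_ne_neg {γ : ℝ} (hγ : γ ∈ Set.Ioo (-1:ℝ) 1) {z w : ℂ}
    (hz : 0 < z.im) (hw : 0 < w.im) : z ^ (γ:ℂ) ≠ -(w ^ (γ:ℂ)) := by
  intro h
  have hz0 : z ≠ 0 := fun h0 => by rw [h0] at hz; simp at hz
  have hw0 : w ≠ 0 := fun h0 => by rw [h0] at hw; simp at hw
  rw [cpow_def_of_ne_zero hz0, cpow_def_of_ne_zero hw0] at h
  have h' : Complex.exp (Complex.log z * (γ:ℂ))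
      = Complex.exp (Complex.log w * (γ:ℂ) + (Real.pi:ℂ) * I) := by
    rw [Complex.exp_add, Complex.exp_pi_mul_I, h]
    try ring
  obtain ⟨n, hn⟩ := exp_eq_exp_iff_exists_int.1 h'
  have hn' : Complex.log z * (γ : ℂ) = Complex.log w * (γ : ℂ) + ((Real.pi:ℝ) : ℂ) * I
      + (n : ℂ) * (2 * (Real.pi:ℂ) * I) := by
    exact hn
  have him := im_of_exp_rel n Real.pi hn'
  have habs := abs_arg_diff_lt hγ hz hw
  have h2 : γ * (z.arg - w.arg) = Real.pi * (1 + 2 * n) := by linarith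
  have h3 : (1:ℝ) ≤ |(1 + 2 * (n:ℝ))| := by
    have : (1 + 2 * n : ℤ) ≠ 0 := by omega
    have := Int.one_le_abs this
    calc (1:ℝ) ≤ |(1 + 2 * n : ℤ)| := by exact_mod_cast this
      _ = |(1 + 2 * (n:ℝ))| := by rw [Int.cast_abs]; push_cast; ring_nf
  rw [h2, abs_mul, _root_.abs_of_nonneg Real.pi_pos.le] at habs
  nlinarith [Real.pi_pos]

lemma injOn_Phi2 {γ : ℝ} (hγ : γ ∈ Set.Ioo (-1:ℝ) 1) (hγ0 : γ ≠ 0) :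
    Set.InjOn (Phi2 γ) {ζ : ℂ | ζ.im ≠ 0} := by
  obtain ⟨C, hC, hrep⟩ := repr_UHP hγ
  have hneg : ∀ ζ : ℂ, ζ.im < 0 → Phi2 γ ζ = -(C * (-ζ) ^ (γ:ℂ)) := by
    intro ζ hζ
    have hodd := odd_Phi2 γ (-ζ)
    rw [neg_neg] at hodd
    rw [hodd, hrep (-ζ) (by simpa using hζ)]
  intro ζ₁ h₁ ζ₂ h₂ heq
  simp only [mem_setOf_eq] at h₁ h₂
  rcases h₁.lt_or_gt with hn₁ | hp₁
  · rcases h₂.lt_or_gt with hn₂ | hp₂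
    · rw [hneg ζ₁ hn₁, hneg ζ₂ hn₂] at heq
      have := mul_left_cancel₀ hC (neg_injective heq)
      have := cpow_inj hγ hγ0 (by simpa using hn₁) (by simpa using hn₂) this
      exact neg_injective this
    · rw [hneg ζ₁ hn₁, hrep ζ₂ hp₂] at heq
      exfalso
      apply cpow_ne_neg hγ hp₂ (show 0 < (-ζ₁).im by simpa using hn₁)
      have : C * ζ₂ ^ (γ:ℂ) = -(C * (-ζ₁) ^ (γ:ℂ)) := heq.symm
      rw [← mul_neg] at this
      exact mul_left_cancel₀ hC this
  · rcases h₂.lt_or_gt with hn₂ | hp₂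
    · rw [hrep ζ₁ hp₁, hneg ζ₂ hn₂] at heq
      exfalso
      apply cpow_ne_neg hγ hp₁ (show 0 < (-ζ₂).im by simpa using hn₂)
      rw [← mul_neg] at heq
      exact mul_left_cancel₀ hC heq
    · rw [hrep ζ₁ hp₁, hrep ζ₂ hp₂] at heq
      exact cpow_inj hγ hγ0 hp₁ hp₂ (mul_left_cancel₀ hC heq)

end Stmt10aux

/-- For `γ ∈ (-1,1) \ {0}`: there is a nonzero constant `C` with
`Φ(ζ) = C·ζ^γ` (principal power) on the upper half-plane, `Φ` is odd on
`ℂ \ ℝ`, and `Φ` is injective on `ℂ \ ℝ`. -/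
theorem stmt_10 (γ : ℝ) (hγ : γ ∈ Set.Ioo (-1 : ℝ) 1) (hγ0 : γ ≠ 0) :
    (∃ C : ℂ, C ≠ 0 ∧ ∀ ζ : ℂ, 0 < ζ.im → Phi2 γ ζ = C * ζ ^ (γ : ℂ)) ∧
    (∀ ζ : ℂ, ζ.im ≠ 0 → Phi2 γ (-ζ) = -Phi2 γ ζ) ∧
    Set.InjOn (Phi2 γ) {ζ : ℂ | ζ.im ≠ 0} :=
  ⟨Stmt10aux.repr_UHP hγ, fun ζ _ => Stmt10aux.odd_Phi2 γ ζ, Stmt10aux.injOn_Phi2 hγ hγ0⟩
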